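/- arXiv:1902.08492 — 6 statements merged into one kernel-verified Lean document; each statement's English description precedes it below -/
import Mathlib

section
/- Let H be a Hilbert space and T a bounded linear operator on H that is an m-isometry for some positive integer m. If Q is an n-nilpotent bounded operator on H commuting with T, then T + Q is a (2n + m - 2)-isometry. -/
open scoped BigOperators

/-- `T` is an `m`-isometry: `∑_{k=0}^m (-1)^{m-k} C(m,k) ‖T^k x‖² = 0` for all `x`. -/
def IsMIsometry {H : Type*} [NormedAddCommGroup H] [InnerProductSpace ℂ H]
    (m : ℕ) (T : H →L[ℂ] H) : Prop :=
  ∀ x : H, ∑ k ∈ Finset.range (m + 1),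
    (-1 : ℝ) ^ (m - k) * (m.choose k) * ‖(T ^ k) x‖ ^ 2 = 0

namespace MIsoAux

open Finset Polynomial Function

/-- `f : ℕ → ℝ` agrees with a real polynomial of degree at most `d`. -/
def PB (d : ℕ) (f : ℕ → ℝ) : Prop :=
  ∃ P : Polynomial ℝ, P.degree ≤ (d : ℕ) ∧ ∀ k : ℕ, f k = P.eval (k : ℝ)

lemma fwdDiff_iter_zero_fun (j : ℕ) :
    (fwdDiff (1:ℕ))^[j] (fun _ : ℕ => (0:ℝ)) = fun _ => 0 :=
  Function.iterate_fixed (by funext y; simp [fwdDiff]) j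

lemma withbot_lt_succ {x : WithBot ℕ} {M : ℕ} :
    x < ((M + 1 : ℕ) : WithBot ℕ) ↔ x ≤ ((M : ℕ) : WithBot ℕ) := by
  cases x with
  | bot =>
      simp only [bot_le, iff_true]
      rw [Nat.cast_withBot]
      exact WithBot.bot_lt_coe _
  | coe a =>
      rw [Nat.cast_withBot, Nat.cast_withBot, WithBot.coe_lt_coe, WithBot.coe_le_coe]
      exact Nat.lt_succ_iff

/-- If all `m`-th forward differences of `g` vanish, `g` agrees with a polynomial of
degree at most `m - 1`. -/
lemma pb_of_diff (m : ℕ) (g : ℕ → ℝ)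
    (hg : ∀ j : ℕ, (fwdDiff (1:ℕ))^[m] g j = 0) : PB (m - 1) g := by
  have hc : ∀ i : ℕ, m ≤ i → (fwdDiff (1:ℕ))^[i] g 0 = 0 := by
    intro i hi
    have h0 : (fwdDiff (1:ℕ))^[m] g = fun _ => 0 := funext hg
    have h1 : (fwdDiff (1:ℕ))^[i] g = (fwdDiff (1:ℕ))^[i - m] ((fwdDiff (1:ℕ))^[m] g) := by
      rw [← Function.iterate_add_apply, Nat.sub_add_cancel hi]
    rw [h1, h0, fwdDiff_iter_zero_fun]
  refine ⟨∑ i ∈ range m, Polynomial.C (((fwdDiff (1:ℕ))^[i] g 0) / i.factorial)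
      * descPochhammer ℝ i, ?_, ?_⟩
  · refine (Polynomial.degree_sum_le _ _).trans ?_
    refine Finset.sup_le fun i hi => ?_
    refine (Polynomial.degree_mul_le _ _).trans ?_
    have h2 : (descPochhammer ℝ i).degree ≤ ((i : ℕ) : WithBot ℕ) := by
      rw [Polynomial.degree_eq_natDegree (monic_descPochhammer ℝ i).ne_zero,
        descPochhammer_natDegree]
    refine le_trans (add_le_add Polynomial.degree_C_le h2) ?_
    rw [zero_add]
    rw [mem_range] at hi
    exact_mod_cast Nat.le_sub_one_of_lt hi
  · intro k
    have h1 := shift_eq_sum_fwdDiff_iter (1:ℕ) g k 0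
    simp only [smul_eq_mul, mul_one, zero_add, nsmul_eq_mul] at h1
    have h2 : ∑ i ∈ range (k+1), (k.choose i : ℝ) * (fwdDiff (1:ℕ))^[i] g 0
        = ∑ i ∈ range m, (k.choose i : ℝ) * (fwdDiff (1:ℕ))^[i] g 0 := by
      rcases le_total (k+1) m with h | h
      · refine Finset.sum_subset (Finset.range_subset_range.mpr h) fun i _ hik => ?_
        rw [mem_range, not_lt] at hik
        rw [Nat.choose_eq_zero_of_lt hik, Nat.cast_zero, zero_mul]
      · refine (Finset.sum_subset (Finset.range_subset_range.mpr h) fun i _ him => ?_).symm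
        rw [mem_range, not_lt] at him
        rw [hc i him, mul_zero]
    rw [h1, h2, Polynomial.eval_finset_sum]
    refine Finset.sum_congr rfl fun i _ => ?_
    rw [Polynomial.eval_mul, Polynomial.eval_C,
      descPochhammer_eval_eq_descFactorial,
      Nat.descFactorial_eq_factorial_mul_choose]
    have hfac : (i.factorial : ℝ) ≠ 0 := by positivity
    push_cast
    field_simp

/-- A polynomial of degree `< M` has vanishing `M`-th forward differences. -/
lemma diff_of_pb : ∀ (M : ℕ) (P : Polynomial ℝ), P.degree < ((M : ℕ) : WithBot ℕ) →
    ∀ y : ℕ, (fwdDiff (1:ℕ))^[M] (fun k : ℕ => P.eval (k : ℝ)) y = 0 := by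
  intro M
  induction M with
  | zero =>
      intro P hP y
      have h0 : P = 0 := Polynomial.degree_eq_bot.mp
        (Nat.WithBot.lt_zero_iff.mp (by exact_mod_cast hP))
      simp [h0]
  | succ M IH =>
      intro P hP y
      rw [Function.iterate_succ_apply]
      have hΔ : fwdDiff (1:ℕ) (fun k : ℕ => P.eval (k : ℝ))
          = fun k : ℕ => (P.comp (X + Polynomial.C 1) - P).eval (k : ℝ) := by
        funext k
        simp only [fwdDiff, Polynomial.eval_sub, Polynomial.eval_comp, Polynomial.eval_add,
          Polynomial.eval_X, Polynomial.eval_C]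
        push_cast
        ring_nf
      rw [hΔ]
      apply IH
      by_cases h0 : P = 0
      · rw [h0]
        simp only [Polynomial.zero_comp, sub_zero, Polynomial.degree_zero]
        rw [Nat.cast_withBot]
        exact WithBot.bot_lt_coe _
      · have hq : (X + Polynomial.C 1 : Polynomial ℝ).natDegree = 1 :=
          Polynomial.natDegree_X_add_C 1
        have hlc : (P.comp (X + Polynomial.C 1)).leadingCoeff = P.leadingCoeff := by
          rw [Polynomial.leadingCoeff_comp (by rw [hq]; norm_num)]
          have h5 : (X + Polynomial.C 1 : Polynomial ℝ).leadingCoeff = 1 :=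
            (Polynomial.monic_X_add_C 1).leadingCoeff
          rw [h5, one_pow, mul_one]
        have hne : P.comp (X + Polynomial.C 1) ≠ 0 := by
          intro hzero
          apply h0
          have h6 := hlc
          rw [hzero, Polynomial.leadingCoeff_zero] at h6
          exact Polynomial.leadingCoeff_eq_zero.mp h6.symm
        have hd : (P.comp (X + Polynomial.C 1)).degree = P.degree := by
          rw [Polynomial.degree_eq_natDegree hne, Polynomial.degree_eq_natDegree h0,
            Polynomial.natDegree_comp, hq, mul_one]
        have hlt := Polynomial.degree_sub_lt hd hne hlc
        rw [hd] at hlt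
        exact lt_of_lt_of_le hlt (withbot_lt_succ.mp hP)

variable {H : Type*} [NormedAddCommGroup H] [InnerProductSpace ℂ H]

lemma norm_pb (m : ℕ) (T : H →L[ℂ] H) (hT : IsMIsometry m T) (u : H) :
    PB (m - 1) (fun k : ℕ => ‖(T ^ k) u‖ ^ 2) := by
  apply pb_of_diff m
  intro j
  rw [fwdDiff_iter_eq_sum_shift]
  refine Eq.trans (Finset.sum_congr rfl fun k _ => ?_) (hT ((T ^ j) u))
  have h1 : (T ^ (j + k • 1)) u = (T ^ k) ((T ^ j) u) := by
    rw [smul_eq_mul, mul_one, add_comm, pow_add]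
    rfl
  show ((-1 : ℤ) ^ (m - k) * (m.choose k : ℤ)) • ‖(T ^ (j + k • 1)) u‖ ^ 2 = _
  rw [h1, zsmul_eq_mul]
  push_cast
  ring

lemma inner_pb (m : ℕ) (T : H →L[ℂ] H) (hT : IsMIsometry m T) (a b : H) :
    PB (m - 1) (fun k : ℕ => (inner ℂ ((T ^ k) a) ((T ^ k) b) : ℂ).re) := by
  obtain ⟨P1, hd1, he1⟩ := norm_pb m T hT (a + b)
  obtain ⟨P2, hd2, he2⟩ := norm_pb m T hT a
  obtain ⟨P3, hd3, he3⟩ := norm_pb m T hT b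
  simp only [] at he1 he2 he3
  refine ⟨Polynomial.C ((1:ℝ)/2) * (P1 - P2 - P3), ?_, ?_⟩
  · have h12 : (P1 - P2).degree ≤ (((m-1 : ℕ)) : WithBot ℕ) :=
      (Polynomial.degree_sub_le _ _).trans (max_le hd1 hd2)
    have h123 : (P1 - P2 - P3).degree ≤ (((m-1 : ℕ)) : WithBot ℕ) :=
      (Polynomial.degree_sub_le _ _).trans (max_le h12 hd3)
    refine (Polynomial.degree_mul_le _ _).trans ?_
    refine le_trans (add_le_add Polynomial.degree_C_le h123) ?_
    rw [zero_add]
  · intro k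
    show (inner ℂ ((T ^ k) a) ((T ^ k) b) : ℂ).re = _
    have hre : (inner ℂ ((T ^ k) a) ((T ^ k) b) : ℂ).re
        = (‖(T ^ k) (a + b)‖ ^ 2 - ‖(T ^ k) a‖ ^ 2 - ‖(T ^ k) b‖ ^ 2) / 2 := by
      have hns := norm_add_sq (𝕜 := ℂ) ((T ^ k) a) ((T ^ k) b)
      rw [map_add]
      simp only [RCLike.re_to_complex] at hns
      rw [hns]
      ring
    rw [hre, he1, he2, he3]
    simp only [Polynomial.eval_mul, Polynomial.eval_C, Polynomial.eval_sub]
    ring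

lemma choose_pb (i : ℕ) :
    ∃ P : Polynomial ℝ, P.degree ≤ ((i : ℕ) : WithBot ℕ) ∧
      ∀ k : ℕ, (k.choose i : ℝ) = P.eval (k : ℝ) := by
  refine ⟨Polynomial.C (((i.factorial : ℝ))⁻¹) * descPochhammer ℝ i, ?_, fun k => ?_⟩
  · refine (Polynomial.degree_mul_le _ _).trans ?_
    have h2 : (descPochhammer ℝ i).degree ≤ ((i : ℕ) : WithBot ℕ) := by
      rw [Polynomial.degree_eq_natDegree (monic_descPochhammer ℝ i).ne_zero,
        descPochhammer_natDegree]
    refine le_trans (add_le_add Polynomial.degree_C_le h2) ?_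
    rw [zero_add]
  · rw [Polynomial.eval_mul, Polynomial.eval_C, descPochhammer_eval_eq_descFactorial,
      Nat.descFactorial_eq_factorial_mul_choose]
    have hfac : (i.factorial : ℝ) ≠ 0 := by positivity
    push_cast
    field_simp

lemma term_pb (m : ℕ) (T : H →L[ℂ] H) (hT : IsMIsometry m T)
    (u v : H) (i j : ℕ) :
    ∃ P : Polynomial ℝ, P.degree ≤ (((i + j + (m-1) : ℕ)) : WithBot ℕ) ∧ ∀ k : ℕ,
      (k.choose i : ℝ) * (k.choose j : ℝ)
        * (inner ℂ ((T ^ (k - i)) u) ((T ^ (k - j)) v) : ℂ).re = P.eval (k : ℝ) := by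
  set s := max i j with hs
  obtain ⟨P0, hd0, he0⟩ := inner_pb m T hT ((T ^ (s - i)) u) ((T ^ (s - j)) v)
  simp only [] at he0
  obtain ⟨Pi, hdi, hei⟩ := choose_pb i
  obtain ⟨Pj, hdj, hej⟩ := choose_pb j
  set Pc := P0.comp (X - Polynomial.C (s : ℝ)) with hPc
  have hdc : Pc.degree ≤ (((m-1 : ℕ)) : WithBot ℕ) := by
    refine Polynomial.degree_le_natDegree.trans ?_
    have h3 : Pc.natDegree = P0.natDegree := by
      rw [hPc, Polynomial.natDegree_comp, Polynomial.natDegree_X_sub_C, mul_one]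
    rw [h3]
    exact_mod_cast Polynomial.natDegree_le_iff_degree_le.mpr hd0
  refine ⟨Pi * Pj * Pc, ?_, ?_⟩
  · refine (Polynomial.degree_mul_le _ _).trans ?_
    refine le_trans (add_le_add ((Polynomial.degree_mul_le _ _).trans
      (add_le_add hdi hdj)) hdc) ?_
    rw [← Nat.cast_add, ← Nat.cast_add]
  · intro k
    have hPeval : (Pi * Pj * Pc).eval (k:ℝ)
        = (k.choose i : ℝ) * (k.choose j : ℝ) * Pc.eval (k:ℝ) := by
      rw [Polynomial.eval_mul, Polynomial.eval_mul, ← hei, ← hej]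
    rw [hPeval]
    rcases le_or_gt s k with hks | hks
    · -- k ≥ s : the shifted polynomial matches
      have hik : i ≤ k := le_trans (le_max_left _ _) hks
      have hjk : j ≤ k := le_trans (le_max_right _ _) hks
      have hceval : Pc.eval (k:ℝ) = P0.eval (((k - s : ℕ)) : ℝ) := by
        rw [hPc, Polynomial.eval_comp, Polynomial.eval_sub, Polynomial.eval_X,
          Polynomial.eval_C, Nat.cast_sub hks]
      have hval := he0 (k - s)
      have h1 : (T ^ (k - s)) ((T ^ (s - i)) u) = (T ^ (k - i)) u := by
        rw [← ContinuousLinearMap.mul_apply, ← pow_add]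
        congr 2
        omega
      have h2 : (T ^ (k - s)) ((T ^ (s - j)) v) = (T ^ (k - j)) v := by
        rw [← ContinuousLinearMap.mul_apply, ← pow_add]
        congr 2
        omega
      rw [h1, h2] at hval
      rw [hceval, ← hval]
    · -- k < s : both sides vanish via a zero binomial coefficient
      rcases max_cases i j with ⟨h1, _⟩ | ⟨h1, _⟩
      · have h4 : k.choose i = 0 := Nat.choose_eq_zero_of_lt (by omega)
        rw [h4]; simp
      · have h4 : k.choose j = 0 := Nat.choose_eq_zero_of_lt (by omega)
        rw [h4]; simp

end MIsoAux

open Finset Polynomial Function MIsoAux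

theorem stmt0 {H : Type*} [NormedAddCommGroup H] [InnerProductSpace ℂ H] [CompleteSpace H]
    (m n : ℕ) (hm : 1 ≤ m) (hn : 1 ≤ n) (T Q : H →L[ℂ] H)
    (hT : IsMIsometry m T) (hQ : Q ^ n = 0) (hcomm : T * Q = Q * T) :
    IsMIsometry (2 * n + m - 2) (T + Q) := by
  intro x
  set M := 2 * n + m - 2 with hM
  have hcQT : Commute T Q := hcomm
  have hQ0 : ∀ j : ℕ, n ≤ j → (Q : H →L[ℂ] H) ^ j = 0 := by
    intro j hj
    calc Q ^ j = Q ^ n * Q ^ (j - n) := by rw [← pow_add, Nat.add_sub_cancel' hj]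
    _ = 0 := by rw [hQ, zero_mul]
  -- Step 1: binomial expansion of `(T+Q)^k x`, truncated at `n` by nilpotency
  have hexp : ∀ k : ℕ, ((T + Q) ^ k) x
      = ∑ i ∈ range n, (k.choose i : ℂ) • ((T ^ (k - i)) ((Q ^ i) x)) := by
    intro k
    have h2 : (T + Q) ^ k
        = ∑ i ∈ range (k+1), T ^ (k - i) * Q ^ i * (k.choose i : H →L[ℂ] H) := by
      rw [hcQT.add_pow k, ← Finset.sum_range_reflect]
      refine Finset.sum_congr rfl fun i hi => ?_
      rw [mem_range, Nat.lt_succ_iff] at hi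
      rw [Nat.add_sub_cancel, Nat.sub_sub_self hi, Nat.choose_symm hi]
    have h3 : ((T + Q) ^ k) x
        = ∑ i ∈ range (k+1), (k.choose i : ℂ) • ((T ^ (k - i)) ((Q ^ i) x)) := by
      rw [h2, ContinuousLinearMap.sum_apply]
      refine Finset.sum_congr rfl fun i _ => ?_
      rw [mul_assoc, ContinuousLinearMap.mul_apply, ContinuousLinearMap.mul_apply,
        ContinuousLinearMap.natCast_apply, ← Nat.cast_smul_eq_nsmul ℂ, map_smul, map_smul]
    rw [h3]
    have hzero : ∀ i ∈ range (max (k+1) n), i ∉ range (k+1) →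
        (k.choose i : ℂ) • ((T ^ (k - i)) ((Q ^ i) x)) = 0 := by
      intro i _ hik
      rw [mem_range, not_lt] at hik
      rw [Nat.choose_eq_zero_of_lt hik, Nat.cast_zero, zero_smul]
    have hzero' : ∀ i ∈ range (max (k+1) n), i ∉ range n →
        (k.choose i : ℂ) • ((T ^ (k - i)) ((Q ^ i) x)) = 0 := by
      intro i _ hin
      rw [mem_range, not_lt] at hin
      rw [hQ0 i hin]
      simp
    rw [Finset.sum_subset (Finset.range_subset_range.mpr (le_max_left (k+1) n)) hzero,
      ← Finset.sum_subset (Finset.range_subset_range.mpr (le_max_right (k+1) n)) hzero']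
  -- Step 2: expand the squared norm into inner products
  have hns : ∀ k : ℕ, ‖((T + Q) ^ k) x‖ ^ 2
      = ∑ i ∈ range n, ∑ j ∈ range n, (k.choose i : ℝ) * (k.choose j : ℝ)
          * (inner ℂ ((T ^ (k - i)) ((Q ^ i) x)) ((T ^ (k - j)) ((Q ^ j) x)) : ℂ).re := by
    intro k
    have hv : ‖((T + Q) ^ k) x‖ ^ 2
        = (inner ℂ (((T + Q) ^ k) x) (((T + Q) ^ k) x) : ℂ).re := by
      rw [← RCLike.re_to_complex]
      exact (inner_self_eq_norm_sq (𝕜 := ℂ) _).symm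
    rw [hv, hexp k, sum_inner, Complex.re_sum]
    refine Finset.sum_congr rfl fun i _ => ?_
    rw [inner_sum, Complex.re_sum]
    refine Finset.sum_congr rfl fun j _ => ?_
    rw [inner_smul_left, inner_smul_right]
    rw [show ((starRingEnd ℂ) (k.choose i : ℂ)) = ((k.choose i : ℝ) : ℂ) by
      simp]
    rw [show ((k.choose j : ℂ)) = ((k.choose j : ℝ) : ℂ) by push_cast; ring]
    rw [← mul_assoc, ← Complex.ofReal_mul, Complex.re_ofReal_mul]
  -- Step 3: each term agrees with a polynomial of degree ≤ i + j + (m-1)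
  choose P hdP heP using fun i j => term_pb m T hT ((Q ^ i) x) ((Q ^ j) x) i j
  set Ptot := ∑ i ∈ range n, ∑ j ∈ range n, P i j with hPtot
  have hdtot : Ptot.degree < ((M : ℕ) : WithBot ℕ) := by
    have hD : Ptot.degree ≤ (((2*n + m - 3 : ℕ)) : WithBot ℕ) := by
      refine (Polynomial.degree_sum_le _ _).trans ?_
      refine Finset.sup_le fun i hi => ?_
      refine (Polynomial.degree_sum_le _ _).trans ?_
      refine Finset.sup_le fun j hj => ?_
      rw [mem_range] at hi hj
      refine (hdP i j).trans ?_
      exact_mod_cast (by omega : i + j + (m-1) ≤ 2*n + m - 3)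
    refine lt_of_le_of_lt hD ?_
    exact_mod_cast (by omega : 2*n + m - 3 < M)
  have heval : ∀ k : ℕ, ‖((T + Q) ^ k) x‖ ^ 2 = Ptot.eval (k : ℝ) := by
    intro k
    rw [hns k, hPtot, Polynomial.eval_finset_sum]
    refine Finset.sum_congr rfl fun i _ => ?_
    rw [Polynomial.eval_finset_sum]
    exact Finset.sum_congr rfl fun j _ => heP i j k
  -- Step 4: conclude via vanishing of the M-th forward difference
  have hfinal := diff_of_pb M Ptot hdtot 0
  rw [fwdDiff_iter_eq_sum_shift] at hfinal
  refine Eq.trans (Finset.sum_congr rfl fun k _ => ?_) hfinal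
  show (-1 : ℝ) ^ (M - k) * (M.choose k) * ‖((T + Q) ^ k) x‖ ^ 2
      = ((-1 : ℤ) ^ (M - k) * (M.choose k : ℤ)) • _
  rw [heval k, zsmul_eq_mul]
  push_cast
  simp only [smul_eq_mul, mul_one, zero_add]
end

section
/- If A is an isometry on a Hilbert space H, Q is an n-nilpotent operator on H, and AQ = QA, then T = A + Q is a (2n-1)-isometry. -/
open scoped BigOperators

open Finset Polynomial
open scoped ComplexInnerProductSpace

lemma fwdDiff_iter_poly (m : ℕ) (p : ℝ[X]) (hp : p.degree < (m : WithBot ℕ)) :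
    (fwdDiff (1:ℕ))^[m] (fun k : ℕ => p.eval (k : ℝ)) = 0 := by
  induction m generalizing p with
  | zero =>
    have : p = 0 := Polynomial.degree_eq_bot.mp (Nat.WithBot.lt_zero_iff.mp (by exact_mod_cast hp))
    subst this
    simp [Function.iterate_zero]
    rfl
  | succ m ih =>
    rw [Function.iterate_succ_apply]
    set q : ℝ[X] := p.comp (X + C 1) - p with hq
    have hev : fwdDiff (1:ℕ) (fun k : ℕ => p.eval (k : ℝ)) = fun k : ℕ => q.eval (k : ℝ) := by
      funext k
      simp only [fwdDiff, hq, Polynomial.eval_sub, Polynomial.eval_comp, Polynomial.eval_add,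
        Polynomial.eval_X, Polynomial.eval_C]
      push_cast
      ring_nf
    rw [hev]
    apply ih
    by_cases hp0 : p = 0
    · subst hp0; simp [hq]
    · have hdeg1 : (X + C (1:ℝ)).natDegree = 1 := Polynomial.natDegree_X_add_C 1
      have hcompdeg : (p.comp (X + C 1)).natDegree = p.natDegree := by
        rw [Polynomial.natDegree_comp, hdeg1, mul_one]
      have hlc : (p.comp (X + C 1)).leadingCoeff = p.leadingCoeff := by
        rw [Polynomial.leadingCoeff_comp (by rw [hdeg1]; norm_num),
          (Polynomial.monic_X_add_C (1:ℝ)).leadingCoeff, one_pow, mul_one]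
      have hlcne : p.leadingCoeff ≠ 0 := Polynomial.leadingCoeff_ne_zero.mpr hp0
      have hcomp0 : p.comp (X + C 1) ≠ 0 := by
        intro h
        rw [h, Polynomial.leadingCoeff_zero] at hlc
        exact hlcne hlc.symm
      have hdegeq : (p.comp (X + C 1)).degree = p.degree := by
        rw [Polynomial.degree_eq_natDegree hcomp0, Polynomial.degree_eq_natDegree hp0, hcompdeg]
      have hqlt : q.degree < p.degree := by
        have := Polynomial.degree_sub_lt hdegeq hcomp0 hlc
        rwa [hdegeq] at this
      by_cases hq0 : q = 0
      · rw [hq0]; simp [Polynomial.degree_zero]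
      · have h1 : p.natDegree < m + 1 := (Polynomial.natDegree_lt_iff_degree_lt hp0).mpr hp
        have h2 : q.natDegree < p.natDegree := Polynomial.natDegree_lt_natDegree hq0 hqlt
        exact (Polynomial.natDegree_lt_iff_degree_lt hq0).mp (by omega)

lemma choose_poly (i : ℕ) : ∃ p : ℝ[X], p.degree ≤ (i : WithBot ℕ) ∧
    ∀ k : ℕ, p.eval (k : ℝ) = (k.choose i : ℝ) := by
  refine ⟨C ((i.factorial : ℝ)⁻¹) * descPochhammer ℝ i, ?_, ?_⟩
  · calc (C ((i.factorial : ℝ)⁻¹) * descPochhammer ℝ i).degree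
        ≤ 0 + (descPochhammer ℝ i).degree :=
          Polynomial.degree_mul_le_of_le (Polynomial.degree_C_le) le_rfl
      _ ≤ (i : WithBot ℕ) := by
          rw [zero_add]
          have := Polynomial.degree_le_natDegree (p := descPochhammer ℝ i)
          rwa [descPochhammer_natDegree] at this
  · intro k
    rw [Polynomial.eval_mul, Polynomial.eval_C, descPochhammer_eval_eq_descFactorial,
      Nat.descFactorial_eq_factorial_mul_choose]
    push_cast
    field_simp


theorem stmt1 {H : Type*} [NormedAddCommGroup H] [InnerProductSpace ℂ H] [CompleteSpace H]
    (n : ℕ) (hn : 1 ≤ n) (A Q : H →L[ℂ] H)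
    (hA : ∀ x : H, ‖A x‖ = ‖x‖) (hQ : Q ^ n = 0) (hQ' : Q ^ (n - 1) ≠ 0)
    (hcomm : A * Q = Q * A) :
    IsMIsometry (2 * n - 1) (A + Q) := by
  intro x
  set m := 2 * n - 1 with hm
  -- basic facts
  have hQzero : ∀ j, n ≤ j → (Q ^ j : H →L[ℂ] H) = 0 := by
    intro j hj
    rw [← Nat.sub_add_cancel hj, pow_add, hQ, mul_zero]
  have hinner : ∀ u v : H, ⟪A u, A v⟫ = ⟪u, v⟫ :=
    (LinearMap.norm_map_iff_inner_map_map (𝕜 := ℂ) A).mp hA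
  have hinnerpow : ∀ (s : ℕ) (u v : H), ⟪(A ^ s) u, (A ^ s) v⟫ = ⟪u, v⟫ := by
    intro s
    induction s with
    | zero => intro u v; simp
    | succ s ih =>
      intro u v
      rw [pow_succ, ContinuousLinearMap.mul_apply, ContinuousLinearMap.mul_apply,
        ih (A u) (A v), hinner]
  -- expansion of (A+Q)^k applied to x
  have hTx : ∀ k : ℕ, ((A + Q) ^ k) x
      = ∑ j ∈ Finset.range n, ((k.choose j : ℂ)) • (A ^ (k - j)) ((Q ^ j) x) := by
    intro k
    have hAQ : Commute A Q := hcomm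
    have hexp := (hAQ.symm).add_pow k
    rw [add_comm Q A] at hexp
    have happ : ((A + Q) ^ k) x
        = ∑ j ∈ Finset.range (k + 1), (k.choose j : ℂ) • (A ^ (k - j)) ((Q ^ j) x) := by
      rw [hexp, ContinuousLinearMap.sum_apply]
      apply Finset.sum_congr rfl
      intro j hj
      rw [(hAQ.symm.pow_pow j (k - j)).eq, mul_assoc, ContinuousLinearMap.mul_apply,
        ContinuousLinearMap.mul_apply, ContinuousLinearMap.natCast_apply,
        map_nsmul, map_nsmul, ← Nat.cast_smul_eq_nsmul ℂ]
    rw [happ]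
    rcases le_total (k + 1) n with hkn | hnk
    · apply Finset.sum_subset (Finset.range_subset_range.mpr hkn)
      intro j _ hj
      rw [Finset.mem_range, not_lt] at hj
      rw [Nat.choose_eq_zero_of_lt (by omega), Nat.cast_zero, zero_smul]
    · symm
      apply Finset.sum_subset (Finset.range_subset_range.mpr hnk)
      intro j _ hj
      rw [Finset.mem_range, not_lt] at hj
      rw [hQzero j hj, ContinuousLinearMap.zero_apply, map_zero, smul_zero]
  -- the inner-products, independent of k
  set g : ℕ → ℕ → ℝ := fun i j =>
    (⟪(A ^ (j - i)) ((Q ^ i) x), (A ^ (i - j)) ((Q ^ j) x)⟫).re with hg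
  have hterm : ∀ k i j, i ≤ k → j ≤ k →
      ⟪(A ^ (k - i)) ((Q ^ i) x), (A ^ (k - j)) ((Q ^ j) x)⟫
      = ⟪(A ^ (j - i)) ((Q ^ i) x), (A ^ (i - j)) ((Q ^ j) x)⟫ := by
    intro k i j hik hjk
    rcases le_total i j with hij | hji
    · have h1 : k - i = (k - j) + (j - i) := by omega
      have h2 : i - j = 0 := by omega
      rw [h1, h2, pow_add, pow_zero, ContinuousLinearMap.mul_apply,
        ContinuousLinearMap.one_apply, hinnerpow (k - j)]
    · have h1 : k - j = (k - i) + (i - j) := by omega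
      have h2 : j - i = 0 := by omega
      rw [h1, h2, pow_add, pow_zero, ContinuousLinearMap.mul_apply,
        ContinuousLinearMap.one_apply, hinnerpow (k - i)]
  -- norm squared as a "polynomial" in k
  have hF : ∀ k : ℕ, ‖((A + Q) ^ k) x‖ ^ 2
      = ∑ i ∈ Finset.range n, ∑ j ∈ Finset.range n,
          ((k.choose i : ℝ) * (k.choose j : ℝ)) * g i j := by
    intro k
    rw [hTx k, @norm_sq_eq_re_inner ℂ]
    rw [sum_inner]
    rw [map_sum]
    apply Finset.sum_congr rfl
    intro i hi
    rw [inner_sum, map_sum]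
    apply Finset.sum_congr rfl
    intro j hj
    rw [inner_smul_left, inner_smul_right]
    by_cases hik : i ≤ k
    · by_cases hjk : j ≤ k
      · rw [hterm k i j hik hjk, hg]
        simp [RCLike.re_to_complex, Complex.mul_re]
        ring
      · rw [Nat.choose_eq_zero_of_lt (show k < j by omega)]
        simp
    · rw [Nat.choose_eq_zero_of_lt (show k < i by omega)]
      simp
  -- build the polynomial
  choose pb hdeg hev using choose_poly
  set P : Polynomial ℝ := ∑ i ∈ Finset.range n, ∑ j ∈ Finset.range n,
      Polynomial.C (g i j) * pb i * pb j with hP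
  have hPeval : ∀ k : ℕ, P.eval (k : ℝ) = ‖((A + Q) ^ k) x‖ ^ 2 := by
    intro k
    rw [hF k, hP]
    simp only [Polynomial.eval_finset_sum, Polynomial.eval_mul, Polynomial.eval_C, hev]
    congr 1; funext i; congr 1; funext j; ring
  have hPdeg : P.degree < (m : WithBot ℕ) := by
    have hb : (⊥ : WithBot ℕ) < (m : WithBot ℕ) := by
      exact_mod_cast WithBot.bot_lt_coe m
    rw [hP]
    apply lt_of_le_of_lt (Polynomial.degree_sum_le _ _)
    rw [Finset.sup_lt_iff hb]
    intro i hi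
    apply lt_of_le_of_lt (Polynomial.degree_sum_le _ _)
    rw [Finset.sup_lt_iff hb]
    intro j hj
    rw [Finset.mem_range] at hi hj
    calc (Polynomial.C (g i j) * pb i * pb j).degree
        ≤ (Polynomial.C (g i j) * pb i).degree + (pb j).degree := Polynomial.degree_mul_le _ _
      _ ≤ ((Polynomial.C (g i j)).degree + (pb i).degree) + (pb j).degree :=
          add_le_add (Polynomial.degree_mul_le _ _) le_rfl
      _ ≤ (0 + (i : WithBot ℕ)) + (j : WithBot ℕ) :=
          add_le_add (add_le_add Polynomial.degree_C_le (hdeg i)) (hdeg j)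
      _ = ((i + j : ℕ) : WithBot ℕ) := by rw [zero_add]; push_cast; rfl
      _ < (m : WithBot ℕ) := by
          have : i + j < m := by omega
          exact_mod_cast this
  -- conclude via forward differences
  have key : (fwdDiff (1:ℕ))^[m] (fun k : ℕ => ‖((A + Q) ^ k) x‖ ^ 2) = 0 := by
    have := fwdDiff_iter_poly m P hPdeg
    rw [funext hPeval] at this
    exact this
  have h0 : ∑ k ∈ Finset.range (m + 1),
      ((-1:ℤ) ^ (m - k) * (m.choose k)) • ‖((A + Q) ^ (0 + k • 1)) x‖ ^ 2 = 0 := by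
    have := congrFun key 0
    rw [fwdDiff_iter_eq_sum_shift] at this
    simpa using this
  rw [← h0]
  apply Finset.sum_congr rfl
  intro k hk
  rw [zsmul_eq_mul]
  simp only [smul_eq_mul, mul_one, zero_add]
  push_cast
  ring
end

section
/- Every eigenvalue of an m-isometry on a Hilbert space has modulus at most 1; if moreover the m-isometry is invertible (e.g., on a finite dimensional space), every eigenvalue has modulus exactly 1. -/
open scoped BigOperators

theorem stmt4 {H : Type*} [NormedAddCommGroup H] [InnerProductSpace ℂ H] [CompleteSpace H]
    (m : ℕ) (hm : 1 ≤ m) (T : H →L[ℂ] H) (hT : IsMIsometry m T)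
    (lam : ℂ) (x : H) (hx : x ≠ 0) (hTx : T x = lam • x) :
    ‖lam‖ ≤ 1 ∧ (IsUnit T → ‖lam‖ = 1) := by
  have hk : ∀ k : ℕ, (T ^ k) x = lam ^ k • x := by
    intro k
    induction k with
    | zero => simp
    | succ n ih =>
      rw [pow_succ', pow_succ']
      simp only [ContinuousLinearMap.mul_apply]
      rw [ih, map_smul, hTx, smul_smul]; ring_nf
  set r : ℝ := ‖lam‖ ^ 2 with hr
  have hnorm : ∀ k : ℕ, ‖(T ^ k) x‖ ^ 2 = r ^ k * ‖x‖ ^ 2 := by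
    intro k
    rw [hk k, norm_smul, mul_pow, norm_pow, hr, ← pow_mul, ← pow_mul, mul_comm k 2]
  have hsum := hT x
  have heq : (r + (-1 : ℝ)) ^ m * ‖x‖ ^ 2 = 0 := by
    rw [add_pow, Finset.sum_mul]
    rw [← hsum]
    apply Finset.sum_congr rfl
    intro k hk'
    rw [hnorm k]
    ring
  have hx2 : ‖x‖ ^ 2 ≠ 0 := pow_ne_zero _ (norm_ne_zero_iff.mpr hx)
  have h1 : (r - 1 : ℝ) ^ m = 0 := by
    have := mul_eq_zero.mp heq
    rcases this with h | h
    · linarith [h, (by ring : (r + (-1 : ℝ)) ^ m = (r - 1) ^ m) ▸ h]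
    · exact absurd h hx2
  have hr1 : r = 1 := by
    have := pow_eq_zero_iff (n := m) (by omega) |>.mp h1
    linarith
  have hl : ‖lam‖ = 1 := by
    have h0 : (0 : ℝ) ≤ ‖lam‖ := norm_nonneg _
    nlinarith [hr1]
  exact ⟨le_of_eq hl, fun _ => hl⟩
end

section
/- On a Hilbert space of dimension n, every (2n)-isometry is a (2n-1)-isometry; more generally any invertible (2ℓ)-isometry is a (2ℓ-1)-isometry. -/
open scoped BigOperators

open Finset fwdDiff Function

local notation "D" => fwdDiff (1:ℤ)

lemma iter_fwdDiff_zero (i : ℕ) : D^[i] (fun _ => (0:ℝ)) = fun _ => (0:ℝ) := by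
  induction i with
  | zero => rfl
  | succ i ih => rw [Function.iterate_succ_apply', ih]; funext j; simp [fwdDiff]

lemma iter_zero_of_le (a : ℤ → ℝ) {m k : ℕ} (h : ∀ j, D^[m] a j = 0)
    (hk : m ≤ k) : ∀ j, D^[k] a j = 0 := by
  obtain ⟨i, rfl⟩ := Nat.exists_eq_add_of_le hk
  intro j
  rw [add_comm, Function.iterate_add_apply, funext h, iter_fwdDiff_zero]

lemma newton_trunc (a : ℤ → ℝ) {m : ℕ} (h0 : ∀ j, D^[m+1] a j = 0)
    {n : ℕ} (hn : m ≤ n) :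
    a n = ∑ k ∈ range (m+1), (n.choose k : ℝ) * D^[k] a 0 := by
  have h := shift_eq_sum_fwdDiff_iter (1 : ℤ) a n 0
  simp only [zero_add, nsmul_eq_mul, mul_one, smul_eq_mul] at h
  rw [h]
  refine (Finset.sum_subset (range_subset_range.2 (by omega)) ?_).symm
  intro k hk hk2
  simp only [mem_range] at hk hk2
  have : D^[k] a 0 = 0 := iter_zero_of_le a h0 (by omega) 0
  simp [this]

lemma leading_nonneg (a : ℤ → ℝ) {m : ℕ} (hm : 1 ≤ m) (hpos : ∀ j, 0 ≤ a j)
    (h0 : ∀ j, D^[m+1] a j = 0) : 0 ≤ D^[m] a 0 := by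
  by_contra hc
  push_neg at hc
  set c : ℝ := D^[m] a 0 with hc0
  set B : ℝ := ∑ k ∈ range m, |D^[k] a 0| with hB
  have hBnn : 0 ≤ B := Finset.sum_nonneg fun k _ => abs_nonneg _
  have key : ∀ n : ℕ, 2 * m ≤ n → (-c) * n ≤ B * 2 ^ m * m.factorial := by
    intro n hn
    have hn1 : (1:ℕ) ≤ n := by omega
    have hmn : m ≤ n := by omega
    have hNewton := newton_trunc a h0 hmn
    rw [Finset.sum_range_succ] at hNewton
    have hposn := hpos n
    rw [hNewton] at hposn
    have hub : ∑ k ∈ range m, (n.choose k : ℝ) * D^[k] a 0 ≤ B * (n:ℝ) ^ (m-1) := by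
      rw [hB, Finset.sum_mul]
      refine Finset.sum_le_sum fun k hk => ?_
      simp only [mem_range] at hk
      calc (n.choose k : ℝ) * D^[k] a 0 ≤ (n.choose k : ℝ) * |D^[k] a 0| := by
            exact mul_le_mul_of_nonneg_left (le_abs_self _) (by positivity)
        _ ≤ (n:ℝ)^(m-1) * |D^[k] a 0| := by
            refine mul_le_mul_of_nonneg_right ?_ (abs_nonneg _)
            calc (n.choose k : ℝ) ≤ (n:ℝ)^k := by exact_mod_cast Nat.choose_le_pow n k
              _ ≤ (n:ℝ)^(m-1) := by
                  refine pow_le_pow_right₀ (by exact_mod_cast hn1) (by omega)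
        _ = |D^[k] a 0| * (n:ℝ)^(m-1) := by ring
    have h1 : (-c) * (n.choose m : ℝ) ≤ B * (n:ℝ) ^ (m-1) := by nlinarith [hposn, hub]
    have hlb : ((n:ℝ)/2) ^ m / (m.factorial : ℝ) ≤ (n.choose m : ℝ) := by
      have h2 := Nat.pow_le_choose (α := ℝ) m n
      refine le_trans ?_ h2
      have hcast : ((n + 1 - m : ℕ) : ℝ) = (n:ℝ) + 1 - m := by
        have : m ≤ n + 1 := by omega
        push_cast [this]; ring
      rw [hcast]
      refine div_le_div_of_nonneg_right ?_ (by positivity)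
      refine pow_le_pow_left₀ (by positivity) ?_ m
      have : (2*m : ℝ) ≤ n := by exact_mod_cast hn
      linarith
    have h3 : (-c) * (((n:ℝ)/2) ^ m / (m.factorial : ℝ)) ≤ B * (n:ℝ)^(m-1) := by
      refine le_trans (mul_le_mul_of_nonneg_left hlb (by linarith)) h1
    have hpowpos : (0:ℝ) < (n:ℝ)^(m-1) := by positivity
    have hnm : ((n:ℝ)/2)^m = (n:ℝ) * (n:ℝ)^(m-1) / 2^m := by
      rw [div_pow]
      congr 1
      rw [← pow_succ']
      congr 1
      omega
    rw [hnm] at h3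
    have hfac : (0:ℝ) < (m.factorial : ℝ) := by exact_mod_cast m.factorial_pos
    have h4 := mul_le_mul_of_nonneg_right h3 (show (0:ℝ) ≤ 2^m * (m.factorial:ℝ) by positivity)
    have h5 : ((-c) * (n:ℝ)) * (n:ℝ)^(m-1) ≤ (B * 2^m * (m.factorial:ℝ)) * (n:ℝ)^(m-1) := by
      calc ((-c) * (n:ℝ)) * (n:ℝ)^(m-1)
          = (-c) * ((n:ℝ) * (n:ℝ)^(m-1) / 2^m / (m.factorial:ℝ)) * (2^m * (m.factorial:ℝ)) := by
            field_simp
        _ ≤ B * (n:ℝ)^(m-1) * (2^m * (m.factorial:ℝ)) := h4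
        _ = (B * 2^m * (m.factorial:ℝ)) * (n:ℝ)^(m-1) := by ring
    exact le_of_mul_le_mul_right h5 hpowpos
  obtain ⟨n, hn⟩ := exists_nat_gt (max (2*m : ℝ) ((B * 2^m * (m.factorial:ℝ)) / (-c)))
  have hn1 : (2*m : ℝ) < n := lt_of_le_of_lt (le_max_left _ _) hn
  have hn2 : (B * 2^m * (m.factorial:ℝ)) / (-c) < n := lt_of_le_of_lt (le_max_right _ _) hn
  have hk := key n (by exact_mod_cast hn1.le)
  have hcpos : (0:ℝ) < -c := by linarith
  rw [div_lt_iff₀ hcpos] at hn2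
  nlinarith [hk, hn2]

lemma fwdDiff_reflect (a : ℤ → ℝ) (m : ℕ) (j : ℤ) :
    D^[m] (fun i => a (-i)) j = (-1:ℝ)^m * D^[m] a (-j - m) := by
  rw [fwdDiff_iter_eq_sum_shift, fwdDiff_iter_eq_sum_shift, Finset.mul_sum,
    ← Finset.sum_range_reflect]
  refine Finset.sum_congr rfl fun k hk => ?_
  simp only [mem_range] at hk
  have hkm : k ≤ m := by omega
  have h1 : m - (m - k) = k := by omega
  have h2 : m.choose (m - k) = m.choose k := Nat.choose_symm hkm
  simp only [smul_eq_mul, zsmul_eq_mul, nsmul_eq_mul, mul_one]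
  push_cast [hkm]
  have hsign : (-1:ℝ)^m * (-1:ℝ)^(m-k) = (-1:ℝ)^k := by
    rw [← pow_add]
    have : m + (m - k) = 2*(m-k) + k := by omega
    rw [this, pow_add, pow_mul]
    simp
  have harg : -(j + ((m:ℤ) - (k:ℤ))) = -j - (m:ℤ) + (k:ℤ) := by ring
  rw [harg, h1, h2, ← hsign]
  ring

lemma core (l : ℕ) (hl : 1 ≤ l) (a : ℤ → ℝ) (hpos : ∀ j, 0 ≤ a j)
    (h0 : ∀ j, D^[2*l] a j = 0) : D^[2*l-1] a 0 = 0 := by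
  set m := 2*l - 1 with hmdef
  have hm1 : m + 1 = 2*l := by omega
  have h0' : ∀ j, D^[m+1] a j = 0 := by intro j; rw [hm1]; exact h0 j
  have hge : 0 ≤ D^[m] a 0 := leading_nonneg a (by omega) hpos h0'
  have h0r : ∀ j, D^[m+1] (fun i => a (-i)) j = 0 := by
    intro j
    rw [fwdDiff_reflect, h0']
    ring
  have hger : 0 ≤ D^[m] (fun i => a (-i)) 0 :=
    leading_nonneg _ (by omega) (fun j => hpos _) h0r
  have hconst : ∀ i : ℕ, D^[m] a (-(i:ℤ)) = D^[m] a 0 := by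
    intro i
    induction i with
    | zero => simp
    | succ i ih =>
        have h := h0' (-((i:ℤ)+1))
        rw [Function.iterate_succ_apply'] at h
        simp only [fwdDiff, sub_eq_zero] at h
        have harg : -((i:ℤ)+1) + 1 = -(i:ℤ) := by ring
        rw [harg] at h
        rw [show -((i+1:ℕ):ℤ) = -((i:ℤ)+1) by push_cast; ring, ← h, ih]
  have hodd : (-1:ℝ)^m = -1 := Odd.neg_one_pow ⟨l-1, by omega⟩
  have hrefl0 : D^[m] (fun i => a (-i)) 0 = - D^[m] a 0 := by
    rw [fwdDiff_reflect, hodd]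
    have : (-0:ℤ) - (m:ℤ) = -(m:ℤ) := by ring
    rw [this, hconst m]
    ring
  rw [hrefl0] at hger
  linarith

lemma op_main {H : Type*} [NormedAddCommGroup H] [InnerProductSpace ℂ H]
    (l : ℕ) (hl : 1 ≤ l) (T : H →L[ℂ] H) (hT : IsUnit T)
    (h : IsMIsometry (2*l) T) : IsMIsometry (2*l-1) T := by
  obtain ⟨u, rfl⟩ := hT
  intro x
  set a : ℤ → ℝ := fun j => ‖(↑(u ^ j) : H →L[ℂ] H) x‖^2 with ha
  have hpow : ∀ (j : ℤ) (k : ℕ),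
      a (j + k) = ‖(((u : H →L[ℂ] H)) ^ k) ((↑(u ^ j) : H →L[ℂ] H) x)‖^2 := by
    intro j k
    have h1 : u ^ (j + (k:ℤ)) = u ^ (k:ℤ) * u ^ j := by
      rw [add_comm, zpow_add]
    rw [ha]
    simp only
    rw [h1, zpow_natCast, Units.val_mul, Units.val_pow_eq_pow_val,
      ContinuousLinearMap.mul_apply]
  have hpos : ∀ j, 0 ≤ a j := fun j => by positivity
  have hsum : ∀ j : ℤ, D^[2*l] a j = 0 := by
    intro j
    rw [fwdDiff_iter_eq_sum_shift]
    have hh := h ((↑(u ^ j) : H →L[ℂ] H) x)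
    rw [← hh]
    refine Finset.sum_congr rfl fun k hk => ?_
    simp only [smul_eq_mul, zsmul_eq_mul, nsmul_eq_mul, mul_one]
    rw [hpow j k]
    push_cast
    ring
  have hgoal := core l hl a hpos hsum
  rw [fwdDiff_iter_eq_sum_shift] at hgoal
  rw [← hgoal]
  refine Finset.sum_congr rfl fun k hk => ?_
  simp only [smul_eq_mul, zsmul_eq_mul, nsmul_eq_mul, mul_one, zero_add]
  rw [show ((k:ℤ)) = (0:ℤ) + (k:ℤ) by ring, hpow 0 k]
  have hu0 : (↑(u ^ (0:ℤ)) : H →L[ℂ] H) x = x := by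
    rw [zpow_zero]; rfl
  rw [hu0]
  push_cast
  ring

lemma inj_of_isometry {H : Type*} [NormedAddCommGroup H] [InnerProductSpace ℂ H]
    (n : ℕ) (T : H →L[ℂ] H) (h : IsMIsometry (2*n) T) :
    ∀ x : H, T x = 0 → x = 0 := by
  intro x hx
  have hsum := h x
  rw [Finset.sum_eq_single_of_mem 0 (by simp)] at hsum
  · simp only [pow_zero, Nat.sub_zero, Nat.choose_zero_right, Nat.cast_one, mul_one,
      ContinuousLinearMap.one_apply] at hsum
    have heven : (-1:ℝ)^(2*n) = 1 := by rw [pow_mul]; simp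
    rw [heven, one_mul] at hsum
    have : ‖x‖ = 0 := by
      have := sq_eq_zero_iff.mp hsum
      exact this
    exact norm_eq_zero.mp this
  · intro k hk hk0
    obtain ⟨k', rfl⟩ := Nat.exists_eq_succ_of_ne_zero hk0
    have hz : (T ^ (k'+1)) x = 0 := by
      rw [pow_succ, ContinuousLinearMap.mul_apply, hx, map_zero]
    simp [hz]

lemma isUnit_of_inj {H : Type*} [NormedAddCommGroup H] [InnerProductSpace ℂ H]
    [FiniteDimensional ℂ H] (T : H →L[ℂ] H) (hinj : ∀ x : H, T x = 0 → x = 0) :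
    IsUnit T := by
  have hker : LinearMap.ker (T : H →ₗ[ℂ] H) = ⊥ :=
    LinearMap.ker_eq_bot'.mpr fun x hx => hinj x hx
  obtain ⟨v, hv⟩ := (LinearMap.isUnit_iff_ker_eq_bot (T : H →ₗ[ℂ] H)).mpr hker
  refine ⟨⟨T, LinearMap.toContinuousLinearMap (↑v⁻¹ : H →ₗ[ℂ] H), ?_, ?_⟩, rfl⟩
  · ext x
    have h1 : ((↑v * ↑v⁻¹ : H →ₗ[ℂ] H)) x = x := by rw [v.mul_inv]; rfl
    rw [Module.End.mul_apply, hv] at h1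
    exact h1
  · ext x
    have h1 : ((↑v⁻¹ * ↑v : H →ₗ[ℂ] H)) x = x := by rw [v.inv_mul]; rfl
    rw [Module.End.mul_apply, hv] at h1
    exact h1

theorem stmt5 :
    (∀ (H : Type) (_ : NormedAddCommGroup H) (_ : InnerProductSpace ℂ H)
      (n : ℕ), 1 ≤ n → FiniteDimensional ℂ H → Module.finrank ℂ H = n →
      ∀ T : H →L[ℂ] H, IsMIsometry (2 * n) T → IsMIsometry (2 * n - 1) T) ∧
    (∀ (H : Type) (_ : NormedAddCommGroup H) (_ : InnerProductSpace ℂ H),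
      CompleteSpace H →
      ∀ (l : ℕ), 1 ≤ l → ∀ T : H →L[ℂ] H, IsUnit T → IsMIsometry (2 * l) T →
      IsMIsometry (2 * l - 1) T) := by
  constructor
  · intro H _ _ n hn hfd _ T hT
    haveI := hfd
    exact op_main n hn T (isUnit_of_inj T (inj_of_isometry n T hT)) hT
  · intro H _ _ _ l hl T hu hT
    exact op_main l hl T hu hT
end

section
/- Any strict (2k-1)-isometry on ℂⁿ with 2 ≤ k ≤ n has at most n-1 distinct eigenvalues. -/
open scoped BigOperators

open scoped BigOperators
open Finset

local notation "⟪" x ", " y "⟫" => @inner ℂ _ _ x y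

variable {n : ℕ}

abbrev E (n : ℕ) := EuclideanSpace ℂ (Fin n)

-- eigenvector under powers
lemma pow_eig (T : E n →L[ℂ] E n) {lam : ℂ} {x : E n} (hx : T x = lam • x) (j : ℕ) :
    (T ^ j) x = lam ^ j • x := by
  induction j with
  | zero => simp
  | succ j ih =>
    rw [pow_succ, ContinuousLinearMap.mul_apply, hx, map_smul, ih, smul_smul, pow_succ]
    ring_nf

-- bilinear form identity
lemma bilinear {m : ℕ} {T : E n →L[ℂ] E n}
    (h : ∀ x : E n, ∑ j ∈ Finset.range (m + 1),
      (-1 : ℝ) ^ (m - j) * (m.choose j) * ‖(T ^ j) x‖ ^ 2 = 0)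
    (x y : E n) :
    ∑ j ∈ Finset.range (m + 1),
      (((-1 : ℝ) ^ (m - j) * (m.choose j) : ℝ) : ℂ) * ⟪(T ^ j) x, (T ^ j) y⟫ = 0 := by
  set c : ℕ → ℂ := fun j => (((-1 : ℝ) ^ (m - j) * (m.choose j) : ℝ) : ℂ) with hc
  set S : E n →ₗ[ℂ] E n := ∑ j ∈ Finset.range (m + 1),
    c j • ((ContinuousLinearMap.adjoint (T ^ j)).comp (T ^ j) : E n →L[ℂ] E n).toLinearMap with hS
  have hSzero : S = 0 := by
    rw [← inner_map_self_eq_zero]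
    intro z
    have : ⟪S z, z⟫ = ∑ j ∈ Finset.range (m + 1), c j * ⟪(T ^ j) z, (T ^ j) z⟫ := by
      simp only [hS, LinearMap.sum_apply, sum_inner, LinearMap.smul_apply, inner_smul_left,
        ContinuousLinearMap.coe_coe, ContinuousLinearMap.comp_apply,
        ContinuousLinearMap.adjoint_inner_left]
      refine Finset.sum_congr rfl fun j _ => ?_
      simp [hc, Complex.conj_ofReal]
    rw [this]
    have h2 : ∑ j ∈ Finset.range (m + 1), c j * ⟪(T ^ j) z, (T ^ j) z⟫
        = ((∑ j ∈ Finset.range (m + 1),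
          (-1 : ℝ) ^ (m - j) * (m.choose j) * ‖(T ^ j) z‖ ^ 2 : ℝ) : ℂ) := by
      rw [Complex.ofReal_sum]
      refine Finset.sum_congr rfl fun j _ => ?_
      rw [hc]
      rw [@inner_self_eq_norm_sq_to_K ℂ]
      push_cast
      ring_nf
      rfl
    rw [h2, h z]
    norm_num
  have : ⟪x, S y⟫ = 0 := by rw [hSzero]; simp
  rw [← this]
  simp only [hS, LinearMap.sum_apply, inner_sum, LinearMap.smul_apply, inner_smul_right,
    ContinuousLinearMap.coe_coe, ContinuousLinearMap.comp_apply,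
    ContinuousLinearMap.adjoint_inner_right]
  rfl

lemma eig_norm_one {m : ℕ} (hm : m ≠ 0) {T : E n →L[ℂ] E n}
    (h : ∀ x : E n, ∑ j ∈ Finset.range (m + 1),
      (-1 : ℝ) ^ (m - j) * (m.choose j) * ‖(T ^ j) x‖ ^ 2 = 0)
    {lam : ℂ} {x : E n} (hx0 : x ≠ 0) (hx : T x = lam • x) : ‖lam‖ = 1 := by
  have key := h x
  have hterm : ∀ j, ‖(T ^ j) x‖ ^ 2 = (‖lam‖ ^ 2) ^ j * ‖x‖ ^ 2 := by
    intro j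
    rw [pow_eig T hx j, norm_smul, norm_pow]
    ring
  rw [Finset.sum_congr rfl (fun j _ => by rw [hterm j])] at key
  have hbin : ∑ j ∈ Finset.range (m + 1),
      (-1 : ℝ) ^ (m - j) * (m.choose j) * ((‖lam‖ ^ 2) ^ j * ‖x‖ ^ 2)
      = (‖lam‖ ^ 2 - 1) ^ m * ‖x‖ ^ 2 := by
    rw [sub_eq_add_neg, add_pow, Finset.sum_mul]
    refine Finset.sum_congr rfl fun j _ => ?_
    ring
  rw [hbin] at key
  have hxnorm : ‖x‖ ^ 2 ≠ 0 := pow_ne_zero _ (norm_ne_zero_iff.mpr hx0)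
  have : (‖lam‖ ^ 2 - 1) ^ m = 0 := by
    rcases mul_eq_zero.mp key with h' | h'
    · exact h'
    · exact absurd h' hxnorm
  have h1 : ‖lam‖ ^ 2 = 1 := by
    have := pow_eq_zero_iff hm |>.mp this
    linarith [sub_eq_zero.mp this]
  nlinarith [norm_nonneg lam]

lemma eig_orth {m : ℕ} (hm : m ≠ 0) {T : E n →L[ℂ] E n}
    (h : ∀ x : E n, ∑ j ∈ Finset.range (m + 1),
      (-1 : ℝ) ^ (m - j) * (m.choose j) * ‖(T ^ j) x‖ ^ 2 = 0)
    {lam mu : ℂ} {x y : E n} (hx0 : x ≠ 0) (hy0 : y ≠ 0)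
    (hx : T x = lam • x) (hy : T y = mu • y) (hne : lam ≠ mu) : ⟪x, y⟫ = 0 := by
  have hl : ‖lam‖ = 1 := eig_norm_one hm h hx0 hx
  have hmu : ‖mu‖ = 1 := eig_norm_one hm h hy0 hy
  have key := bilinear h x y
  have hterm : ∀ j, ⟪(T ^ j) x, (T ^ j) y⟫ = ((starRingEnd ℂ) lam * mu) ^ j * ⟪x, y⟫ := by
    intro j
    rw [pow_eig T hx j, pow_eig T hy j, inner_smul_left, inner_smul_right, map_pow]
    ring
  rw [Finset.sum_congr rfl (fun j _ => by rw [hterm j])] at key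
  have hbin : ∑ j ∈ Finset.range (m + 1),
      (((-1 : ℝ) ^ (m - j) * (m.choose j) : ℝ) : ℂ) * (((starRingEnd ℂ) lam * mu) ^ j * ⟪x, y⟫)
      = ((starRingEnd ℂ) lam * mu - 1) ^ m * ⟪x, y⟫ := by
    rw [sub_eq_add_neg, add_pow, Finset.sum_mul]
    refine Finset.sum_congr rfl fun j _ => ?_
    push_cast
    ring
  rw [hbin] at key
  have hne1 : (starRingEnd ℂ) lam * mu - 1 ≠ 0 := by
    intro hcontra
    have hlm : (starRingEnd ℂ) lam * mu = 1 := by linear_combination hcontra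
    have hll : (starRingEnd ℂ) lam * lam = 1 := by
      rw [mul_comm, Complex.mul_conj]
      norm_cast
      rw [Complex.normSq_eq_norm_sq]
      simp [hl]
    have hlne : (starRingEnd ℂ) lam ≠ 0 := by
      simp only [ne_eq, map_eq_zero]
      intro h0
      rw [h0] at hl; simp at hl
    exact hne (mul_left_cancel₀ hlne (hll.trans hlm.symm))
  rcases mul_eq_zero.mp key with h' | h'
  · exact absurd (pow_eq_zero_iff hm |>.mp h') hne1
  · exact h'

theorem stmt14 (n k : ℕ) (hk : 2 ≤ k) (hkn : k ≤ n)
    (T : EuclideanSpace ℂ (Fin n) →L[ℂ] EuclideanSpace ℂ (Fin n))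
    (h1 : IsMIsometry (2 * k - 1) T) (h2 : ¬ IsMIsometry (2 * k - 2) T) :
    {lam : ℂ | ∃ x : EuclideanSpace ℂ (Fin n), x ≠ 0 ∧ T x = lam • x}.ncard ≤ n - 1 := by
  by_contra hc
  push_neg at hc
  set Sp := {lam : ℂ | ∃ x : EuclideanSpace ℂ (Fin n), x ≠ 0 ∧ T x = lam • x} with hSp
  have hn : n ≤ Sp.ncard := by omega
  obtain ⟨t, hts, htn⟩ := Set.exists_subset_card_eq hn
  have htfin : t.Finite := by
    rcases Set.finite_or_infinite t with hf | hf
    · exact hf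
    · rw [hf.ncard] at htn; omega
  have hcard : htfin.toFinset.card = n := by
    rw [← htn, Set.ncard_eq_toFinset_card _ htfin]
  set e := Finset.equivFinOfCardEq hcard with he
  set lam : Fin n → ℂ := fun i => ((e.symm i : ℂ)) with hlam
  have hlaminj : Function.Injective lam := by
    intro i j hij
    exact e.symm.injective (Subtype.coe_injective hij)
  have hlammem : ∀ i, lam i ∈ Sp := by
    intro i
    exact hts (htfin.mem_toFinset.mp (e.symm i).2)
  have hm1 : 2 * k - 1 ≠ 0 := by omega
  -- choose eigenvectors
  have hex : ∀ i : Fin n, ∃ x : EuclideanSpace ℂ (Fin n), x ≠ 0 ∧ T x = lam i • x :=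
    fun i => hlammem i
  choose x hx0 hxeig using hex
  set v : Fin n → EuclideanSpace ℂ (Fin n) := fun i => ((‖x i‖ : ℂ))⁻¹ • x i with hv
  have hvnorm : ∀ i, ‖v i‖ = 1 := by
    intro i
    have h' : ‖v i‖ = ‖((‖x i‖ : ℂ))⁻¹‖ * ‖x i‖ := norm_smul _ _
    rw [h', norm_inv, Complex.norm_real, Real.norm_eq_abs,
      abs_of_nonneg (norm_nonneg _), inv_mul_cancel₀ (norm_ne_zero_iff.mpr (hx0 i))]
  have hveig : ∀ i, T (v i) = lam i • v i := by
    intro i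
    show T (((‖x i‖ : ℂ))⁻¹ • x i) = lam i • (((‖x i‖ : ℂ))⁻¹ • x i)
    rw [map_smul, hxeig i, smul_comm]
  have hon : Orthonormal ℂ v := by
    rw [orthonormal_iff_ite]
    intro i j
    by_cases hij : i = j
    · subst hij
      simp only [if_pos rfl]
      rw [@inner_self_eq_norm_sq_to_K ℂ, hvnorm i]
      norm_num
    · simp only [if_neg hij]
      have hne : lam i ≠ lam j := fun h => hij (hlaminj h)
      have horth : ⟪x i, x j⟫ = 0 := eig_orth hm1 h1 (hx0 i) (hx0 j) (hxeig i) (hxeig j) hne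
      rw [hv]
      simp only [inner_smul_left, inner_smul_right, horth, mul_zero]
  have hsp : ⊤ ≤ Submodule.span ℂ (Set.range v) := by
    have hli := hon.linearIndependent
    have hcard' : Fintype.card (Fin n) = Module.finrank ℂ (EuclideanSpace ℂ (Fin n)) := by
      rw [Fintype.card_fin, finrank_euclideanSpace_fin]
    have : Nonempty (Fin n) := ⟨⟨0, by omega⟩⟩
    exact (hli.span_eq_top_of_card_eq_finrank hcard').ge
  set b := OrthonormalBasis.mk hon hsp with hb
  have hbv : ∀ i, b i = v i := fun i => by rw [hb]; simp [OrthonormalBasis.coe_mk]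
  have hlamnorm : ∀ i, ‖lam i‖ = 1 := fun i => eig_norm_one hm1 h1 (hx0 i) (hxeig i)
  -- T preserves norms
  have hT : ∀ z, ‖T z‖ = ‖z‖ := by
    intro z
    have hrep : ∑ i, b.repr z i • v i = z := by
      conv_rhs => rw [← b.sum_repr z]
      exact Finset.sum_congr rfl fun i _ => by rw [hbv i]
    have hTz : T z = ∑ i, (b.repr z i * lam i) • v i := by
      conv_lhs => rw [← hrep]
      rw [map_sum]
      refine Finset.sum_congr rfl fun i _ => ?_
      rw [map_smul, hveig i, smul_smul]
    have h1' : ⟪T z, T z⟫ = ∑ i, (starRingEnd ℂ) (b.repr z i) * (b.repr z i) := by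
      rw [hTz, hon.inner_sum]
      refine Finset.sum_congr rfl fun i _ => ?_
      have hll : (starRingEnd ℂ) (lam i) * lam i = 1 := by
        rw [← Complex.normSq_eq_conj_mul_self]
        rw [Complex.normSq_eq_norm_sq, hlamnorm i]
        norm_num
      rw [map_mul]
      calc (starRingEnd ℂ) (b.repr z i) * (starRingEnd ℂ) (lam i) * (b.repr z i * lam i)
          = (starRingEnd ℂ) (b.repr z i) * (b.repr z i) * ((starRingEnd ℂ) (lam i) * lam i) := by
            ring
        _ = (starRingEnd ℂ) (b.repr z i) * (b.repr z i) := by rw [hll, mul_one]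
    have h2' : ⟪z, z⟫ = ∑ i, (starRingEnd ℂ) (b.repr z i) * (b.repr z i) := by
      conv_lhs => rw [← hrep]
      rw [hon.inner_sum]
    have hinner : ⟪T z, T z⟫ = ⟪z, z⟫ := by rw [h1', h2']
    have hr : ‖T z‖ ^ 2 = ‖z‖ ^ 2 := by
      rw [← @inner_self_eq_norm_sq ℂ, ← @inner_self_eq_norm_sq ℂ, hinner]
    nlinarith [norm_nonneg (T z), norm_nonneg z, sq_nonneg (‖T z‖ - ‖z‖), sq_nonneg (‖T z‖ + ‖z‖)]
  have hTpow : ∀ (j : ℕ) (z : EuclideanSpace ℂ (Fin n)), ‖(T ^ j) z‖ = ‖z‖ := by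
    intro j
    induction j with
    | zero => intro z; simp
    | succ j ih =>
      intro z
      rw [pow_succ, ContinuousLinearMap.mul_apply]
      rw [ih (T z), hT z]
  apply h2
  intro z
  set m := 2 * k - 2 with hmm
  have hsum : ∑ j ∈ Finset.range (m + 1),
      (-1 : ℝ) ^ (m - j) * (m.choose j) * ‖(T ^ j) z‖ ^ 2
      = (1 + (-1 : ℝ)) ^ m * ‖z‖ ^ 2 := by
    rw [add_pow, Finset.sum_mul]
    refine Finset.sum_congr rfl fun j _ => ?_
    rw [hTpow j z]
    ring
  rw [hsum]
  have hmne : m ≠ 0 := by omega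
  rw [show (1 : ℝ) + (-1) = 0 by ring, zero_pow hmne, zero_mul]
end

section
/- If T is an n-isometry on ℂⁿ that is diagonalizable with n distinct eigenvalues, then T is unitary (i.e., an isometry). -/
open scoped BigOperators

open scoped ComplexConjugate

lemma binom_sum_r (w : ℝ) (n : ℕ) :
    ∑ k ∈ Finset.range (n+1), ((-1:ℝ))^(n-k) * (n.choose k) * w^k = (w - 1)^n := by
  rw [sub_eq_add_neg, Commute.add_pow (Commute.all _ _)]
  exact Finset.sum_congr rfl fun k hk => by ring

lemma binom_sum_c (w : ℂ) (n : ℕ) :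
    ∑ k ∈ Finset.range (n+1), ((-1:ℂ))^(n-k) * (n.choose k) * w^k = (w - 1)^n := by
  rw [sub_eq_add_neg, Commute.add_pow (Commute.all _ _)]
  exact Finset.sum_congr rfl fun k hk => by ring

lemma pow_eig_s15 {H : Type*} [NormedAddCommGroup H] [InnerProductSpace ℂ H]
    (T : H →L[ℂ] H) (a : ℂ) (x : H) (hx : T x = a • x) (k : ℕ) :
    (T ^ k) x = a ^ k • x := by
  induction k with
  | zero => simp
  | succ k ih =>
    rw [pow_succ', ContinuousLinearMap.mul_apply, ih, map_smul, hx, smul_smul, pow_succ]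

lemma re_binom_sum (w u : ℂ) (n : ℕ) :
    ∑ k ∈ Finset.range (n+1), ((-1:ℝ))^(n-k) * (n.choose k) * (w^k * u).re
      = ((w - 1)^n * u).re := by
  have h1 : ∀ k, ((-1:ℝ))^(n-k) * (n.choose k) * (w^k * u).re
      = ((((-1:ℂ))^(n-k) * (n.choose k) * w^k) * u).re := by
    intro k
    have h2 : (((-1:ℂ))^(n-k) * (n.choose k) * w^k) * u
        = ((((-1:ℝ))^(n-k) * (n.choose k) : ℝ) : ℂ) * (w^k * u) := by push_cast; ring
    rw [h2, Complex.re_ofReal_mul]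
  rw [Finset.sum_congr rfl (fun k _ => h1 k), ← Complex.re_sum, ← Finset.sum_mul, binom_sum_c]

lemma eig_orth_s15 {H : Type*} [NormedAddCommGroup H] [InnerProductSpace ℂ H]
    {n : ℕ} (hn : 1 ≤ n) {T : H →L[ℂ] H} (hT : IsMIsometry n T)
    {a b : ℂ} {x y : H} (hx : T x = a • x) (hy : T y = b • y)
    (ha : ‖a‖ = 1) (hb : ‖b‖ = 1) (hab : a ≠ b) :
    (inner ℂ x y : ℂ) = 0 := by
  set w : ℂ := conj a * b with hw
  set z : ℂ := inner ℂ x y with hz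
  have key : ∀ c : ℂ, ((w - 1)^n * (c * z)).re = 0 := by
    intro c
    have h := hT (x + c • y)
    have hterm : ∀ k, ‖(T ^ k) (x + c • y)‖ ^ 2
        = (‖x‖^2 + ‖c‖^2 * ‖y‖^2) + 2 * ((w^k * (c * z)).re) := by
      intro k
      rw [map_add, map_smul, pow_eig_s15 T a x hx k, pow_eig_s15 T b y hy k]
      rw [norm_add_sq (𝕜 := ℂ)]
      have h1 : ‖a ^ k • x‖^2 = ‖x‖^2 := by
        rw [norm_smul, norm_pow, ha, one_pow, one_mul]
      have h2 : ‖c • b ^ k • y‖^2 = ‖c‖^2 * ‖y‖^2 := by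
        rw [norm_smul, norm_smul, norm_pow, hb, one_pow, one_mul, mul_pow]
      have h3 : (inner ℂ (a ^ k • x) (c • b ^ k • y) : ℂ) = w^k * (c * z) := by
        rw [inner_smul_left, inner_smul_right, inner_smul_right, hw, hz, mul_pow, map_pow]
        ring
      rw [h1, h2, h3]
      simp only [RCLike.re_to_complex]
      ring
    rw [Finset.sum_congr rfl (fun k _ => by rw [hterm k])] at h
    have hsplit : ∑ k ∈ Finset.range (n+1), ((-1:ℝ))^(n-k) * (n.choose k) *
        ((‖x‖^2 + ‖c‖^2 * ‖y‖^2) + 2 * ((w^k * (c * z)).re))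
      = (‖x‖^2 + ‖c‖^2 * ‖y‖^2) * (∑ k ∈ Finset.range (n+1),
          ((-1:ℝ))^(n-k) * (n.choose k) * (1:ℝ)^k)
        + 2 * ∑ k ∈ Finset.range (n+1), ((-1:ℝ))^(n-k) * (n.choose k) * ((w^k * (c * z)).re) := by
      rw [Finset.mul_sum, Finset.mul_sum, ← Finset.sum_add_distrib]
      exact Finset.sum_congr rfl fun k _ => by ring
    rw [hsplit, binom_sum_r, re_binom_sum] at h
    simp only [sub_self] at h
    rw [zero_pow (by omega : n ≠ 0)] at h
    linarith
  have hw1 : w ≠ 1 := by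
    intro hww
    apply hab
    have hnsq : Complex.normSq a = 1 := by
      rw [Complex.normSq_eq_norm_sq, ha, one_pow]
    have hna : a * conj a = 1 := by
      rw [Complex.mul_conj, hnsq, Complex.ofReal_one]
    have : a * w = a := by rw [hww, mul_one]
    rw [hw, ← mul_assoc, hna, one_mul] at this
    exact this.symm
  have h1 := key 1
  have h2 := key Complex.I
  rw [one_mul] at h1
  have h2' : ((w - 1)^n * z).im = 0 := by
    have : (w - 1)^n * (Complex.I * z) = Complex.I * ((w - 1)^n * z) := by ring
    rw [this, Complex.I_mul_re] at h2
    linarith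
  have hz0 : (w - 1)^n * z = 0 := Complex.ext h1 h2'
  have hwn : (w - 1)^n ≠ 0 := pow_ne_zero _ (sub_ne_zero.mpr hw1)
  exact (mul_eq_zero.mp hz0).resolve_left hwn

lemma eig_mod_one {H : Type*} [NormedAddCommGroup H] [InnerProductSpace ℂ H]
    {n : ℕ} (hn : 1 ≤ n) {T : H →L[ℂ] H} (hT : IsMIsometry n T)
    {a : ℂ} {x : H} (hx0 : x ≠ 0) (hx : T x = a • x) : ‖a‖ = 1 := by
  have h := hT x
  have hterm : ∀ k, ‖(T ^ k) x‖ ^ 2 = (‖a‖^2)^k * ‖x‖^2 := by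
    intro k
    rw [pow_eig_s15 T a x hx k, norm_smul, norm_pow, mul_pow, ← pow_mul, ← pow_mul, mul_comm k 2,
      pow_mul]
  rw [Finset.sum_congr rfl (fun k _ => by rw [hterm k])] at h
  have h2 : (‖a‖^2 - 1)^n * ‖x‖^2 = 0 := by
    rw [← binom_sum_r, Finset.sum_mul]
    rw [← h]
    exact Finset.sum_congr rfl fun k _ => by ring
  have hx2 : ‖x‖^2 ≠ 0 := pow_ne_zero _ (norm_ne_zero_iff.mpr hx0)
  have h3 : (‖a‖^2 - 1)^n = 0 := by
    rcases mul_eq_zero.mp h2 with h | h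
    · exact h
    · exact absurd h hx2
  have h4 : ‖a‖^2 = 1 := by
    have := pow_eq_zero_iff (by omega : n ≠ 0) |>.mp h3
    linarith
  nlinarith [norm_nonneg a]

theorem stmt15 (n : ℕ) (hn : 1 ≤ n)
    (T : EuclideanSpace ℂ (Fin n) →L[ℂ] EuclideanSpace ℂ (Fin n))
    (hT : IsMIsometry n T)
    (lam : Fin n → ℂ) (v : Fin n → EuclideanSpace ℂ (Fin n))
    (hlam : Function.Injective lam)
    (hv : ∀ i, v i ≠ 0 ∧ T (v i) = lam i • v i) :
    ∀ x, ‖T x‖ = ‖x‖ := by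
  haveI : Nonempty (Fin n) := ⟨⟨0, by omega⟩⟩
  have hmod : ∀ i, ‖lam i‖ = 1 := fun i => eig_mod_one hn hT (hv i).1 (hv i).2
  set e : Fin n → EuclideanSpace ℂ (Fin n) := fun i => (‖v i‖⁻¹ : ℂ) • v i with he
  have hTe : ∀ i, T (e i) = lam i • e i := by
    intro i
    rw [he]
    simp only [map_smul, (hv i).2, smul_smul, mul_comm]
  have horth : Orthonormal ℂ e := by
    constructor
    · intro i
      have h0 : ‖v i‖ ≠ 0 := norm_ne_zero_iff.mpr (hv i).1
      rw [he]
      simp only [norm_smul]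
      rw [norm_inv, Complex.norm_real, Real.norm_of_nonneg (norm_nonneg _), inv_mul_cancel₀ h0]
    · intro i j hij
      have hz : (inner ℂ (v i) (v j) : ℂ) = 0 :=
        eig_orth_s15 hn hT (hv i).2 (hv j).2 (hmod i) (hmod j) (fun h => hij (hlam h))
      simp only [he, inner_smul_left, inner_smul_right, hz, mul_zero]
  have hcard : Fintype.card (Fin n) = Module.finrank ℂ (EuclideanSpace ℂ (Fin n)) := by
    simp [finrank_euclideanSpace_fin]
  let b := basisOfOrthonormalOfCardEqFinrank horth hcard
  have hb : ⇑b = e := coe_basisOfOrthonormalOfCardEqFinrank horth hcard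
  let onb := b.toOrthonormalBasis (by rwa [hb])
  have honb : ⇑onb = e := by
    rw [Module.Basis.coe_toOrthonormalBasis, hb]
  have horth' : Orthonormal ℂ onb := onb.orthonormal
  intro x
  set c : EuclideanSpace ℂ (Fin n) := onb.repr x with hc
  have hTx : T x = ∑ j, (lam j * c j) • onb j := by
    conv_lhs => rw [← onb.sum_repr x]
    rw [map_sum]
    refine Finset.sum_congr rfl fun j _ => ?_
    rw [map_smul, honb, hTe j, ← honb, smul_smul, mul_comm]
  have hrepr : ∀ i, onb.repr (T x) i = lam i * c i := by
    intro i
    rw [onb.repr_apply_apply, hTx, horth'.inner_right_fintype]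
  calc ‖T x‖ = ‖onb.repr (T x)‖ := (onb.repr.norm_map _).symm
    _ = Real.sqrt (∑ i, ‖onb.repr (T x) i‖^2) := EuclideanSpace.norm_eq _
    _ = Real.sqrt (∑ i, ‖c i‖^2) := by
        congr 1
        refine Finset.sum_congr rfl fun i _ => ?_
        rw [hrepr i, norm_mul, hmod i, one_mul]
    _ = ‖c‖ := (EuclideanSpace.norm_eq _).symm
    _ = ‖x‖ := onb.repr.norm_map x
end
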